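/- Let m be a prime number greater than 3 and let D_m be the dihedral group of order 2m. Then for any three subgroups H₁, H₂, H₃ of D_m satisfying the triple product property, |H₁|·|H₂|·|H₃| ≤ 2m. (That is, no three subgroups of D_m prove that its pseudo-exponent is less than 3.) -/

import Mathlib

/-- The right quotient set `Q(S) = {s₁s₂⁻¹ : s₁, s₂ ∈ S}` of a subset of a group. -/
def rightQuotient {G : Type*} [Group G] (S : Set G) : Set G :=
  {g | ∃ s₁ ∈ S, ∃ s₂ ∈ S, g = s₁ * s₂⁻¹}

/-- Subsets `S₁, S₂, S₃` of a group satisfy the triple product property if whenever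
`qᵢ ∈ Q(Sᵢ)` and `q₁q₂q₃ = 1`, we have `q₁ = q₂ = q₃ = 1`. -/
def TPP {G : Type*} [Group G] (S₁ S₂ S₃ : Set G) : Prop :=
  ∀ q₁ ∈ rightQuotient S₁, ∀ q₂ ∈ rightQuotient S₂, ∀ q₃ ∈ rightQuotient S₃,
    q₁ * q₂ * q₃ = 1 → q₁ = 1 ∧ q₂ = 1 ∧ q₃ = 1

/-- A group `G` realizes `⟨n₁, n₂, n₃⟩` if there are finite subsets `Sᵢ ⊆ G` with
`|Sᵢ| = nᵢ` satisfying the triple product property. -/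
def Realizes (G : Type*) [Group G] (n₁ n₂ n₃ : ℕ) : Prop :=
  ∃ S₁ S₂ S₃ : Set G, S₁.Finite ∧ S₂.Finite ∧ S₃.Finite ∧
    S₁.ncard = n₁ ∧ S₂.ncard = n₂ ∧ S₃.ncard = n₃ ∧ TPP S₁ S₂ S₃

open DihedralGroup

lemma mem_rq {G : Type*} [Group G] (H : Subgroup G) {h : G} (hh : h ∈ H) :
    h ∈ rightQuotient (H : Set G) := ⟨h, hh, 1, H.one_mem, by simp⟩

lemma r_pow_nat {m : ℕ} (a : ZMod m) (n : ℕ) :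
    (r a : DihedralGroup m) ^ n = r ((n : ZMod m) * a) := by
  induction n with
  | zero => simp
  | succ k ih =>
    rw [pow_succ, ih, r_mul_r]
    push_cast
    ring_nf

/-- A subgroup whose order is divisible by `m` (prime, `> 3`) contains all rotations. -/
lemma rot_mem {m : ℕ} (hm : m.Prime) (h3 : 3 < m) (H : Subgroup (DihedralGroup m))
    (hd : m ∣ Nat.card H) (i : ZMod m) : r i ∈ H := by
  haveI : NeZero m := ⟨hm.ne_zero⟩
  haveI : Fact m.Prime := ⟨hm⟩
  obtain ⟨g, hg⟩ := exists_prime_orderOf_dvd_card' (G := H) m hd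
  have hgm : (g : DihedralGroup m) ^ m = 1 := by
    have := pow_orderOf_eq_one g
    rw [hg] at this
    exact_mod_cast congrArg (Subtype.val) this
  have hg1 : (g : DihedralGroup m) ≠ 1 := by
    intro h
    have : g = 1 := Subtype.ext h
    rw [this, orderOf_one] at hg
    omega
  obtain ⟨a, ha⟩ | ⟨a, ha⟩ : (∃ a, (g : DihedralGroup m) = r a) ∨
      (∃ a, (g : DihedralGroup m) = sr a) := by
    rcases (g : DihedralGroup m) with a | a
    · exact Or.inl ⟨a, rfl⟩
    · exact Or.inr ⟨a, rfl⟩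
  · have ha0 : a ≠ 0 := by
      intro h; rw [h, ← one_def] at ha; exact hg1 ha
    have key : r i = (r a : DihedralGroup m) ^ (i * a⁻¹).val := by
      rw [r_pow_nat, ZMod.natCast_val, ZMod.cast_id]
      rw [mul_assoc, inv_mul_cancel₀ ha0, mul_one]
    rw [key, ← ha]
    exact pow_mem (SetLike.coe_mem g) _
  · exfalso
    have h2 : (g : DihedralGroup m) ^ 2 = 1 := by
      rw [ha, sq, sr_mul_self]
    have hdvd : orderOf (g : DihedralGroup m) ∣ 2 := orderOf_dvd_of_pow_eq_one h2
    have hdm : orderOf (g : DihedralGroup m) ∣ m := orderOf_dvd_of_pow_eq_one hgm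
    have hcop : Nat.gcd 2 m = 1 :=
      (Nat.coprime_primes Nat.prime_two hm).mpr (by omega)
    have h1 : orderOf (g : DihedralGroup m) ∣ 1 := hcop ▸ Nat.dvd_gcd hdvd hdm
    exact hg1 (orderOf_eq_one_iff.mp (Nat.dvd_one.mp h1))

/-- A subgroup of order 2 of `D_m` (`m` odd prime) contains a reflection. -/
lemma refl_mem {m : ℕ} (hm : m.Prime) (h3 : 3 < m) (H : Subgroup (DihedralGroup m))
    (hc : Nat.card H = 2) : ∃ a, sr a ∈ H := by
  haveI : NeZero m := ⟨hm.ne_zero⟩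
  haveI : Fact (Nat.Prime 2) := ⟨Nat.prime_two⟩
  haveI : Fact m.Prime := ⟨hm⟩
  obtain ⟨g, hg⟩ := exists_prime_orderOf_dvd_card' (G := H) 2 (by rw [hc])
  have hg2 : (g : DihedralGroup m) ^ 2 = 1 := by
    have := pow_orderOf_eq_one g
    rw [hg] at this
    exact_mod_cast congrArg (Subtype.val) this
  have hg1 : (g : DihedralGroup m) ≠ 1 := by
    intro h
    have : g = 1 := Subtype.ext h
    rw [this, orderOf_one] at hg
    omega
  obtain ⟨a, ha⟩ | ⟨a, ha⟩ : (∃ a, (g : DihedralGroup m) = r a) ∨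
      (∃ a, (g : DihedralGroup m) = sr a) := by
    rcases (g : DihedralGroup m) with a | a
    · exact Or.inl ⟨a, rfl⟩
    · exact Or.inr ⟨a, rfl⟩
  · exfalso
    rw [ha, r_pow_nat, one_def] at hg2
    have h2a : (2 : ZMod m) * a = 0 := by
      injection hg2 with h
      try exact_mod_cast h
    have h2u : (2 : ZMod m) ≠ 0 := by
      intro h
      have h' := (ZMod.natCast_eq_zero_iff 2 m).mp (by exact_mod_cast h)
      have := Nat.le_of_dvd (by norm_num) h'
      omega
    have ha0 : a = 0 := by
      rcases mul_eq_zero.mp h2a with h | h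
      · exact absurd h h2u
      · exact h
    rw [ha0, ← one_def] at ha
    exact hg1 ha
  · exact ⟨a, ha ▸ SetLike.coe_mem g⟩

theorem stmt_17 (m : ℕ) (hm : m.Prime) (h3 : 3 < m)
    (H₁ H₂ H₃ : Subgroup (DihedralGroup m))
    (htpp : TPP (H₁ : Set (DihedralGroup m)) (H₂ : Set (DihedralGroup m))
      (H₃ : Set (DihedralGroup m))) :
    Nat.card H₁ * Nat.card H₂ * Nat.card H₃ ≤ 2 * m := by
  haveI : NeZero m := ⟨hm.ne_zero⟩
  haveI : Fact (1 < m) := ⟨hm.one_lt⟩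
  have hG : Nat.card (DihedralGroup m) = 2 * m := by
    rw [Nat.card_eq_fintype_card, DihedralGroup.card]
  have T : ∀ a ∈ H₁, ∀ b ∈ H₂, ∀ c ∈ H₃, a * b * c = 1 → a = 1 ∧ b = 1 ∧ c = 1 :=
    fun a ha b hb c hc h => htpp a (mem_rq H₁ ha) b (mem_rq H₂ hb) c (mem_rq H₃ hc) h
  -- nontriviality of special elements
  have rone : (r 1 : DihedralGroup m) ≠ 1 := by
    rw [one_def]; simp [-r_zero]
  have srne : ∀ a : ZMod m, (sr a : DihedralGroup m) ≠ 1 := by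
    intro a; rw [one_def]; simp [-r_zero]
  -- trivial pairwise intersections
  have triv12 : ∀ g ∈ H₁, g ∈ H₂ → g = 1 := fun g h1 h2 =>
    (T g h1 g⁻¹ (H₂.inv_mem h2) 1 H₃.one_mem (by simp)).1
  have triv13 : ∀ g ∈ H₁, g ∈ H₃ → g = 1 := fun g h1 h3' =>
    (T g h1 1 H₂.one_mem g⁻¹ (H₃.inv_mem h3') (by simp)).1
  have triv23 : ∀ g ∈ H₂, g ∈ H₃ → g = 1 := fun g h2 h3' =>
    (T 1 H₁.one_mem g h2 g⁻¹ (H₃.inv_mem h3') (by simp)).2.1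
  -- divisibility
  have d1 : Nat.card H₁ ∣ 2 * m := hG ▸ Subgroup.card_subgroup_dvd_card H₁
  have d2 : Nat.card H₂ ∣ 2 * m := hG ▸ Subgroup.card_subgroup_dvd_card H₂
  have d3 : Nat.card H₃ ∣ 2 * m := hG ▸ Subgroup.card_subgroup_dvd_card H₃
  have small : ∀ (H : Subgroup (DihedralGroup m)), Nat.card H ∣ 2 * m →
      ¬ m ∣ Nat.card H → Nat.card H = 1 ∨ Nat.card H = 2 := by
    intro H hd hnd
    have hcop : Nat.Coprime (Nat.card H) m :=
      Nat.Coprime.symm ((Nat.Prime.coprime_iff_not_dvd hm).mpr hnd)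
    have h2 : Nat.card H ∣ 2 := hcop.dvd_of_dvd_mul_right hd
    have := Nat.le_of_dvd (by norm_num) h2
    have hc1 : 0 < Nat.card H := Nat.card_pos
    omega
  have big : ∀ (H : Subgroup (DihedralGroup m)), Nat.card H ∣ 2 * m →
      m ∣ Nat.card H → Nat.card H = m ∨ Nat.card H = 2 * m := by
    intro H hd hmd
    obtain ⟨k, hk⟩ := hmd
    have hk2 : k ∣ 2 := by
      have : m * k ∣ m * 2 := by rw [← hk, mul_comm m 2]; exact hd
      exact (mul_dvd_mul_iff_left (by omega : m ≠ 0)).mp this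
    have := Nat.le_of_dvd (by norm_num) hk2
    have hc1 : 1 ≤ Nat.card H := Nat.card_pos
    interval_cases k <;> omega
  -- main case analysis
  by_cases hm1 : m ∣ Nat.card H₁
  · have hrot : ∀ i, r i ∈ H₁ := rot_mem hm h3 H₁ hm1
    have hm2 : ¬ m ∣ Nat.card H₂ := fun hd =>
      rone (triv12 (r 1) (hrot 1) (rot_mem hm h3 H₂ hd 1))
    have hm3 : ¬ m ∣ Nat.card H₃ := fun hd =>
      rone (triv13 (r 1) (hrot 1) (rot_mem hm h3 H₃ hd 1))
    rcases small H₂ d2 hm2 with c2 | c2 <;> rcases small H₃ d3 hm3 with c3 | c3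
    · rw [c2, c3, mul_one, mul_one]
      exact Nat.le_of_dvd (by omega) d1
    · -- H₃ has a reflection; card H₁ must be m
      obtain ⟨b, hb⟩ := refl_mem hm h3 H₃ c3
      rcases big H₁ d1 hm1 with c1 | c1
      · rw [c1, c2, c3]; try omega
      · exfalso
        have htop : H₁ = ⊤ := Subgroup.eq_top_of_card_eq H₁ (by rw [c1, hG])
        exact srne b (triv13 (sr b) (htop ▸ Subgroup.mem_top _) hb)
    · obtain ⟨a, ha⟩ := refl_mem hm h3 H₂ c2
      rcases big H₁ d1 hm1 with c1 | c1
      · rw [c1, c2, c3]; try omega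
      · exfalso
        have htop : H₁ = ⊤ := Subgroup.eq_top_of_card_eq H₁ (by rw [c1, hG])
        exact srne a (triv12 (sr a) (htop ▸ Subgroup.mem_top _) ha)
    · exfalso
      obtain ⟨a, ha⟩ := refl_mem hm h3 H₂ c2
      obtain ⟨b, hb⟩ := refl_mem hm h3 H₃ c3
      have := T (r (a - b)) (hrot _) (sr a) ha (sr b) hb
        (by rw [r_mul_sr, sr_mul_sr]; rw [one_def]; congr 1 <;> ring)
      exact srne a this.2.1
  · by_cases hm2 : m ∣ Nat.card H₂
    · have hrot : ∀ i, r i ∈ H₂ := rot_mem hm h3 H₂ hm2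
      have hm3 : ¬ m ∣ Nat.card H₃ := fun hd =>
        rone (triv23 (r 1) (hrot 1) (rot_mem hm h3 H₃ hd 1))
      rcases small H₁ d1 hm1 with c1 | c1 <;> rcases small H₃ d3 hm3 with c3 | c3
      · rw [c1, c3, one_mul, mul_one]
        exact Nat.le_of_dvd (by omega) d2
      · obtain ⟨b, hb⟩ := refl_mem hm h3 H₃ c3
        rcases big H₂ d2 hm2 with c2 | c2
        · rw [c1, c2, c3]; try omega
        · exfalso
          have htop : H₂ = ⊤ := Subgroup.eq_top_of_card_eq H₂ (by rw [c2, hG])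
          exact srne b (triv23 (sr b) (htop ▸ Subgroup.mem_top _) hb)
      · obtain ⟨a, ha⟩ := refl_mem hm h3 H₁ c1
        rcases big H₂ d2 hm2 with c2 | c2
        · rw [c1, c2, c3]; try omega
        · exfalso
          have htop : H₂ = ⊤ := Subgroup.eq_top_of_card_eq H₂ (by rw [c2, hG])
          exact srne a (triv12 (sr a) ha (htop ▸ Subgroup.mem_top _))
      · exfalso
        obtain ⟨a, ha⟩ := refl_mem hm h3 H₁ c1
        obtain ⟨b, hb⟩ := refl_mem hm h3 H₃ c3
        have := T (sr a) ha (r (b - a)) (hrot _) (sr b) hb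
          (by rw [sr_mul_r, sr_mul_sr]; rw [one_def]; congr 1 <;> ring)
        exact srne a this.1
    · by_cases hm3 : m ∣ Nat.card H₃
      · have hrot : ∀ i, r i ∈ H₃ := rot_mem hm h3 H₃ hm3
        rcases small H₁ d1 hm1 with c1 | c1 <;> rcases small H₂ d2 hm2 with c2 | c2
        · rw [c1, c2, one_mul, one_mul]
          exact Nat.le_of_dvd (by omega) d3
        · obtain ⟨a, ha⟩ := refl_mem hm h3 H₂ c2
          rcases big H₃ d3 hm3 with c3 | c3
          · rw [c1, c2, c3]; try omega
          · exfalso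
            have htop : H₃ = ⊤ := Subgroup.eq_top_of_card_eq H₃ (by rw [c3, hG])
            exact srne a (triv23 (sr a) ha (htop ▸ Subgroup.mem_top _))
        · obtain ⟨a, ha⟩ := refl_mem hm h3 H₁ c1
          rcases big H₃ d3 hm3 with c3 | c3
          · rw [c1, c2, c3]; try omega
          · exfalso
            have htop : H₃ = ⊤ := Subgroup.eq_top_of_card_eq H₃ (by rw [c3, hG])
            exact srne a (triv13 (sr a) ha (htop ▸ Subgroup.mem_top _))
        · exfalso
          obtain ⟨a, ha⟩ := refl_mem hm h3 H₁ c1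
          obtain ⟨b, hb⟩ := refl_mem hm h3 H₂ c2
          have := T (sr a) ha (sr b) hb (r (a - b)) (hrot _)
            (by rw [sr_mul_sr, r_mul_r]; rw [one_def]; congr 1 <;> ring)
          exact srne a this.1
      · rcases small H₁ d1 hm1 with c1 | c1 <;> rcases small H₂ d2 hm2 with c2 | c2 <;>
          rcases small H₃ d3 hm3 with c3 | c3 <;> rw [c1, c2, c3] <;> omega
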